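/- Let K be a symmetric positive definite n×n real matrix with n ≥ 2, let f ∈ ℝⁿ, and let c = K⁻¹ f. Fix an index k ∈ {1, ..., n}, let T = {1, ..., n} \ {k}, and let β = (K_{T,T})⁻¹ f_T be the coefficients of the interpolant trained on all indices except k. Then the leave-one-out residual at index k satisfies f_k − Σ_{j ∈ T} K_{k,j} β_j = c_k / (K⁻¹)_{k,k}, where (K⁻¹)_{k,k} > 0 is the k-th diagonal entry of K⁻¹. -/

import Mathlib

open Matrix Finset

lemma sum_split {n : ℕ} (k : Fin n) (h : Fin n → ℝ) :
    ∑ j : Fin n, h j = h k + ∑ j : {j : Fin n // j ≠ k}, h j := by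
  rw [← Finset.sum_subtype (Finset.univ.erase k) (by simp) h,
    Finset.add_sum_erase _ h (Finset.mem_univ k)]

lemma posdef_sub {n : ℕ} (K : Matrix (Fin n) (Fin n) ℝ) (hK : K.PosDef) (k : Fin n) :
    (K.submatrix (Subtype.val : {j : Fin n // j ≠ k} → Fin n) Subtype.val).PosDef := by
  rw [Matrix.posDef_iff_dotProduct_mulVec]
  constructor
  · ext i j
    simpa [Matrix.conjTranspose_apply, Matrix.submatrix_apply] using hK.1.apply i.1 j.1
  · intro x hx
    set y : Fin n → ℝ := fun i => if h : i = k then 0 else x ⟨i, h⟩ with hy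
    have hyk : y k = 0 := by simp [hy]
    have hyv : ∀ j : {j : Fin n // j ≠ k}, y j = x j := by
      intro j; simp [hy, j.2]
    have hyne : y ≠ 0 := by
      intro h0
      apply hx
      funext j
      have := congrFun h0 j.1
      rwa [hyv] at this
    have hpos := hK.dotProduct_mulVec_pos hyne
    have key : star y ⬝ᵥ K *ᵥ y
        = star x ⬝ᵥ (K.submatrix (Subtype.val : {j : Fin n // j ≠ k} → Fin n) Subtype.val) *ᵥ x := by
      simp only [dotProduct, Matrix.mulVec, star_trivial]
      rw [sum_split k]
      rw [hyk, zero_mul, zero_add]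
      apply Finset.sum_congr rfl
      intro i _
      rw [hyv]
      congr 1
      rw [sum_split k (fun j => K i j * y j), hyk, mul_zero, zero_add]
      apply Finset.sum_congr rfl
      intro j _
      rw [hyv]
      rfl
    rw [← key]
    exact hpos

/-- **Rippa's LOOCV formula.** Let `K` be a symmetric positive definite
`n × n` real matrix with `n ≥ 2`, `f ∈ ℝⁿ`, `c = K⁻¹ f`. For an index `k`, let
`T = {1,…,n} \ {k}` and `β = (K_{T,T})⁻¹ f_T`. Then the leave-one-out residual at `k`
satisfies `f k − ∑_{j ∈ T} K k j * β j = c k / (K⁻¹)_{k,k}`, where `(K⁻¹)_{k,k} > 0`. -/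
theorem rippa_loocv
    (n : ℕ) (hn : 2 ≤ n) (K : Matrix (Fin n) (Fin n) ℝ) (hK : K.PosDef)
    (f : Fin n → ℝ) (c : Fin n → ℝ) (hc : c = K⁻¹.mulVec f)
    (k : Fin n)
    (KTT : Matrix {j : Fin n // j ≠ k} {j : Fin n // j ≠ k} ℝ)
    (hKTT : KTT = K.submatrix (Subtype.val : {j : Fin n // j ≠ k} → Fin n) Subtype.val)
    (β : {j : Fin n // j ≠ k} → ℝ)
    (hβ : β = KTT⁻¹.mulVec (fun j : {j : Fin n // j ≠ k} => f j)) :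
    0 < K⁻¹ k k ∧
    f k - ∑ j : {j : Fin n // j ≠ k}, K k j * β j = c k / K⁻¹ k k := by
  have hKinv : K⁻¹.PosDef := hK.inv
  -- positivity of diagonal entry
  have hsingle : (Pi.single k 1 : Fin n → ℝ) ≠ 0 := by
    intro h0
    have := congrFun h0 k
    simp at this
  have hd : 0 < K⁻¹ k k := by
    have := hKinv.dotProduct_mulVec_pos hsingle
    simpa [dotProduct, Matrix.mulVec, Pi.single_apply, ite_mul, mul_ite] using this
  refine ⟨hd, ?_⟩
  have hdne : K⁻¹ k k ≠ 0 := ne_of_gt hd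
  have hdetK : IsUnit K.det := isUnit_iff_ne_zero.mpr (ne_of_gt hK.det_pos)
  set g : Fin n → ℝ := fun i => K⁻¹ i k with hg
  set u : Fin n → ℝ := fun i => c i - (c k / K⁻¹ k k) * g i with hu
  have huk : u k = 0 := by
    simp only [hu, hg]
    rw [div_mul_cancel₀ _ hdne, sub_self]
  have hKc : K *ᵥ c = f := by
    rw [hc, Matrix.mulVec_mulVec, Matrix.mul_nonsing_inv K hdetK, Matrix.one_mulVec]
  have hKg : K *ᵥ g = Pi.single k 1 := by
    have : g = K⁻¹ *ᵥ Pi.single k 1 := by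
      funext i
      simp [hg, Matrix.mulVec_single]
    rw [this, Matrix.mulVec_mulVec, Matrix.mul_nonsing_inv K hdetK, Matrix.one_mulVec]
  have hKu : ∀ i, (K *ᵥ u) i = f i - (c k / K⁻¹ k k) * (Pi.single k 1 : Fin n → ℝ) i := by
    intro i
    have : (K *ᵥ u) i = (K *ᵥ c) i - (c k / K⁻¹ k k) * (K *ᵥ g) i := by
      simp only [Matrix.mulVec, dotProduct, hu, mul_sub, Finset.sum_sub_distrib,
        Finset.mul_sum]
      ring_nf
      congr 1
      apply Finset.sum_congr rfl
      intro j _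
      ring
    rw [this, hKc, hKg]
  -- the submatrix identity
  have hPD : (K.submatrix (Subtype.val : {j : Fin n // j ≠ k} → Fin n) Subtype.val).PosDef :=
    posdef_sub K hK k
  have hdetT : IsUnit KTT.det := by
    rw [hKTT]; exact isUnit_iff_ne_zero.mpr (ne_of_gt hPD.det_pos)
  have hsum : ∀ i : Fin n, ∑ j : {j : Fin n // j ≠ k}, K i j * u j = (K *ᵥ u) i := by
    intro i
    have := sum_split k (fun j => K i j * u j)
    simp only [huk, mul_zero, zero_add] at this
    rw [← this]
    rfl
  have hTu : KTT *ᵥ (fun j : {j : Fin n // j ≠ k} => u j) = fun j : {j : Fin n // j ≠ k} => f j := by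
    funext i
    show ∑ j : {j : Fin n // j ≠ k}, KTT i j * u j = f i
    rw [hKTT]
    simp only [Matrix.submatrix_apply]
    rw [hsum i.1, hKu i.1, Pi.single_apply]
    simp [i.2]
  have hβu : β = fun j : {j : Fin n // j ≠ k} => u j := by
    rw [hβ, ← hTu, Matrix.mulVec_mulVec, Matrix.nonsing_inv_mul KTT hdetT, Matrix.one_mulVec]
  rw [hβu]
  have h1 : ∑ j : {j : Fin n // j ≠ k}, K k j * u j = (K *ᵥ u) k := hsum k
  rw [h1, hKu k, Pi.single_eq_same, mul_one]
  ring
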